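/- Let ξ_1,…,ξ_N be independent Bernoulli random variables with parameters p_j ∈ (0,1), let ξ̄ = (1/N)·Σ_{j=1}^N ξ_j and p̄ = (1/N)·Σ_{j=1}^N p_j. For any ε, δ ∈ (0,1), set A = ε·ln(1/ε) + (1−ε)·ln(1/(1−ε)) + (1/N)·ln(1/δ). If 0 < p̄ ≤ 1/(1 + exp(A/ε)), then P(ξ̄ ≤ ε) ≥ 1 − δ. -/

import Mathlib

open MeasureTheory ProbabilityTheory Real

/-- For independent Bernoulli random variables `ξ_j` with parameters
`p_j ∈ (0,1)`, with `ξ̄ = (1/N)Σ ξ_j`, `p̄ = (1/N)Σ p_j`, and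
`A = ε ln(1/ε) + (1−ε) ln(1/(1−ε)) + (1/N) ln(1/δ)`:
if `0 < p̄ ≤ 1/(1 + exp(A/ε))`, then `P(ξ̄ ≤ ε) ≥ 1 − δ`. -/
theorem bernoulli_average_upper_tail
    {Ω : Type*} [MeasurableSpace Ω] (μ : Measure Ω) [IsProbabilityMeasure μ]
    {N : ℕ} (hN : 0 < N)
    (ξ : Fin N → Ω → ℝ) (hξm : ∀ j, Measurable (ξ j))
    (hξval : ∀ j ω, ξ j ω = 0 ∨ ξ j ω = 1)
    (hindep : iIndepFun ξ μ)
    (p : Fin N → ℝ) (hp0 : ∀ j, 0 < p j) (hp1 : ∀ j, p j < 1)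
    (hpe : ∀ j, (μ {ω | ξ j ω = 1}).toReal = p j)
    (ε δ : ℝ) (hε0 : 0 < ε) (hε1 : ε < 1) (hδ0 : 0 < δ) (hδ1 : δ < 1)
    (hpbar0 : 0 < (N : ℝ)⁻¹ * ∑ j, p j)
    (hpbar : (N : ℝ)⁻¹ * ∑ j, p j
      ≤ 1 / (1 + Real.exp ((ε * Real.log (1 / ε) + (1 - ε) * Real.log (1 / (1 - ε))
          + (N : ℝ)⁻¹ * Real.log (1 / δ)) / ε))) :
    1 - δ ≤ (μ {ω | (N : ℝ)⁻¹ * ∑ j, ξ j ω ≤ ε}).toReal := by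
  have hNR : (0:ℝ) < N := Nat.cast_pos.mpr hN
  set q : ℝ := (N : ℝ)⁻¹ * ∑ j, p j with hq_def
  set A : ℝ := ε * Real.log (1 / ε) + (1 - ε) * Real.log (1 / (1 - ε))
      + (N : ℝ)⁻¹ * Real.log (1 / δ) with hA_def
  have hε1' : (0:ℝ) < 1 - ε := by linarith
  -- A ≥ ε log(1/ε)
  have hlog1ε : 0 ≤ Real.log (1 / ε) := Real.log_nonneg (by rw [le_div_iff₀ hε0]; linarith)
  have hlog1ε' : 0 ≤ Real.log (1 / (1 - ε)) := Real.log_nonneg (by rw [le_div_iff₀ hε1']; linarith)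
  have hlog1δ : 0 ≤ Real.log (1 / δ) := Real.log_nonneg (by rw [le_div_iff₀ hδ0]; linarith)
  have hAge : ε * Real.log (1 / ε) ≤ A := by
    have h1 : 0 ≤ (1 - ε) * Real.log (1 / (1 - ε)) := mul_nonneg (by linarith) hlog1ε'
    have h2 : 0 ≤ (N : ℝ)⁻¹ * Real.log (1 / δ) := mul_nonneg (by positivity) hlog1δ
    rw [hA_def]; linarith
  have hA0 : 0 ≤ A := le_trans (mul_nonneg hε0.le hlog1ε) hAge
  -- q ≤ exp(-A/ε)
  have hq_exp : q ≤ Real.exp (-(A / ε)) := by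
    calc q ≤ 1 / (1 + Real.exp (A / ε)) := hpbar
      _ ≤ 1 / Real.exp (A / ε) := by
          apply div_le_div_of_nonneg_left one_pos.le (Real.exp_pos _) (by linarith)
      _ = Real.exp (-(A / ε)) := by rw [Real.exp_neg]; rw [one_div]
  -- log q ≤ -A/ε
  have hlogq : Real.log q ≤ -(A / ε) := by
    calc Real.log q ≤ Real.log (Real.exp (-(A / ε))) :=
          Real.log_le_log hpbar0 hq_exp
      _ = -(A / ε) := Real.log_exp _
  have hεlogq : ε * Real.log q ≤ -A := by
    have := mul_le_mul_of_nonneg_left hlogq hε0.le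
    rw [mul_neg, mul_div_cancel₀ _ hε0.ne'] at this
    exact this
  -- q ≤ ε
  have hqε : q ≤ ε := by
    calc q ≤ Real.exp (-(A / ε)) := hq_exp
      _ ≤ Real.exp (Real.log ε) := by
          apply Real.exp_le_exp.mpr
          have : Real.log (1 / ε) ≤ A / ε := by
            rw [le_div_iff₀ hε0]; nlinarith [hAge]
          rw [Real.log_div one_ne_zero hε0.ne'] at this
          simp only [Real.log_one] at this
          linarith
      _ = ε := Real.exp_log hε0
  have hq1 : q < 1 := lt_of_le_of_lt hqε hε1
  have hq1' : (0:ℝ) < 1 - q := by linarith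
  -- the Chernoff parameter
  set t : ℝ := Real.log (ε * (1 - q) / ((1 - ε) * q)) with ht_def
  have hr_pos : 0 < ε * (1 - q) / ((1 - ε) * q) := by positivity
  have hr_ge1 : 1 ≤ ε * (1 - q) / ((1 - ε) * q) := by
    rw [le_div_iff₀ (by positivity)]
    nlinarith
  have ht0 : 0 ≤ t := Real.log_nonneg hr_ge1
  have het : Real.exp t = ε * (1 - q) / ((1 - ε) * q) := Real.exp_log hr_pos
  -- integrability of exp(t * ξ j)
  have hint : ∀ j : Fin N, Integrable (fun ω => Real.exp (t * ξ j ω)) μ := by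
    intro j
    apply Integrable.mono' (integrable_const (Real.exp |t|))
    · exact ((hξm j).const_mul t).exp.aestronglyMeasurable
    · filter_upwards with ω
      rw [Real.norm_eq_abs, abs_of_pos (Real.exp_pos _)]
      apply Real.exp_le_exp.mpr
      rcases hξval j ω with h | h <;> rw [h] <;> simp [abs_nonneg, le_abs_self]
  -- mgf of each ξ j
  have hmeas1 : ∀ j : Fin N, MeasurableSet {ω | ξ j ω = 1} := by
    intro j
    exact (hξm j) (measurableSet_singleton 1)
  have hintξ : ∀ j : Fin N, Integrable (ξ j) μ := by
    intro j
    apply Integrable.mono' (integrable_const (1:ℝ)) (hξm j).aestronglyMeasurable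
    filter_upwards with ω
    rcases hξval j ω with h | h <;> rw [h] <;> norm_num
  have hEξ : ∀ j : Fin N, ∫ ω, ξ j ω ∂μ = p j := by
    intro j
    have hind : ξ j = Set.indicator {ω | ξ j ω = 1} (fun _ => (1:ℝ)) := by
      funext ω
      rcases hξval j ω with h | h
      · rw [h, Set.indicator_of_notMem]
        simp only [Set.mem_setOf_eq, h]; norm_num
      · rw [h, Set.indicator_of_mem]
        exact h
    rw [hind, MeasureTheory.integral_indicator_const (1:ℝ) (hmeas1 j), smul_eq_mul, mul_one]
    exact hpe j
  have hmgf : ∀ j : Fin N, mgf (ξ j) μ t = 1 + (Real.exp t - 1) * p j := by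
    intro j
    have hptw : (fun ω => Real.exp (t * ξ j ω))
        = fun ω => 1 + (Real.exp t - 1) * ξ j ω := by
      funext ω
      rcases hξval j ω with h | h <;> rw [h] <;> simp
    rw [mgf, hptw]
    rw [MeasureTheory.integral_add (integrable_const 1) ((hintξ j).const_mul _)]
    simp [MeasureTheory.integral_const_mul, hEξ j]
  -- Chernoff bound
  have hS : Integrable (fun ω => Real.exp (t * (∑ j, ξ j) ω)) μ := by
    apply ProbabilityTheory.iIndepFun.integrable_exp_mul_sum hindep hξm
    intro j _
    exact hint j
  have hcher := ProbabilityTheory.measure_ge_le_exp_mul_mgf (X := ∑ j, ξ j) (μ := μ)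
    ((N:ℝ) * ε) ht0 hS
  rw [ProbabilityTheory.iIndepFun.mgf_sum hindep hξm] at hcher
  -- AM-GM on the product of mgfs
  set M : ℝ := 1 + (Real.exp t - 1) * q with hM_def
  have hz_nonneg : ∀ j : Fin N, 0 ≤ 1 + (Real.exp t - 1) * p j := by
    intro j
    have h1 : 1 ≤ Real.exp t := Real.one_le_exp ht0
    have h2 : 0 ≤ (Real.exp t - 1) * p j := mul_nonneg (by linarith) (hp0 j).le
    linarith
  have hM_pos : 0 < M := by
    have h1 : 1 ≤ Real.exp t := Real.one_le_exp ht0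
    have h2 : 0 ≤ (Real.exp t - 1) * q := mul_nonneg (by linarith) hpbar0.le
    rw [hM_def]; linarith
  have hAMGM : ∏ j, mgf (ξ j) μ t ≤ M ^ N := by
    have hw' : ∑ _i : Fin N, (N:ℝ)⁻¹ = 1 := by
      rw [Finset.sum_const, Finset.card_univ, Fintype.card_fin, nsmul_eq_mul,
        mul_inv_cancel₀ hNR.ne']
    have hgm := Real.geom_mean_le_arith_mean_weighted Finset.univ
      (fun _ : Fin N => (N:ℝ)⁻¹) (fun j => 1 + (Real.exp t - 1) * p j)
      (fun i _ => by positivity) hw'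
      (fun i _ => hz_nonneg i)
    have hsum : ∑ i : Fin N, (N:ℝ)⁻¹ * (1 + (Real.exp t - 1) * p i) = M := by
      have h1 : ∑ i : Fin N, (N:ℝ)⁻¹ * (1 + (Real.exp t - 1) * p i)
          = ∑ i : Fin N, ((N:ℝ)⁻¹ + (Real.exp t - 1) * ((N:ℝ)⁻¹ * p i)) := by
        apply Finset.sum_congr rfl; intros; ring
      rw [h1, Finset.sum_add_distrib, hw', ← Finset.mul_sum, ← Finset.mul_sum, hM_def, hq_def]
    rw [hsum] at hgm
    have hGnn : 0 ≤ ∏ i : Fin N, (1 + (Real.exp t - 1) * p i) ^ ((N:ℝ)⁻¹) :=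
      Finset.prod_nonneg fun i _ => Real.rpow_nonneg (hz_nonneg i) _
    have key : ∏ j, mgf (ξ j) μ t
        = (∏ i : Fin N, (1 + (Real.exp t - 1) * p i) ^ ((N:ℝ)⁻¹)) ^ N := by
      rw [← Finset.prod_pow]
      apply Finset.prod_congr rfl
      intro i _
      rw [hmgf i, Real.rpow_inv_natCast_pow (hz_nonneg i) hN.ne']
    rw [key]
    exact pow_le_pow_left₀ hGnn hgm N
  -- M = (1-q)/(1-ε)
  have hM_eq : M = (1 - q) / (1 - ε) := by
    rw [hM_def, het]
    field_simp
    ring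
  -- the key exponential bound
  have hfinal : Real.exp (-t * ((N:ℝ) * ε)) * M ^ N ≤ δ := by
    have hlhs_pos : 0 < Real.exp (-t * ((N:ℝ) * ε)) * M ^ N := by positivity
    rw [← Real.exp_log hlhs_pos, ← Real.exp_log hδ0, Real.exp_le_exp]
    rw [Real.log_mul (Real.exp_pos _).ne' (pow_pos hM_pos N).ne', Real.log_exp,
      Real.log_pow, hM_eq]
    have hlt : t = Real.log ε + Real.log (1 - q) - Real.log (1 - ε) - Real.log q := by
      rw [ht_def, Real.log_div (by positivity) (by positivity),
        Real.log_mul hε0.ne' hq1'.ne', Real.log_mul hε1'.ne' hpbar0.ne']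
      ring
    have hlM : Real.log ((1 - q) / (1 - ε)) = Real.log (1 - q) - Real.log (1 - ε) :=
      Real.log_div hq1'.ne' hε1'.ne'
    rw [hlt, hlM]
    -- remains a real inequality
    have hA_expand : A = -(ε * Real.log ε) - (1 - ε) * Real.log (1 - ε)
        - (N:ℝ)⁻¹ * Real.log δ := by
      rw [hA_def, one_div, one_div, one_div, Real.log_inv, Real.log_inv, Real.log_inv]
      ring
    have hlogq1 : Real.log (1 - q) ≤ 0 := Real.log_nonpos hq1'.le (by linarith)
    have h1 : (1 - ε) * Real.log (1 - q) ≤ 0 := mul_nonpos_of_nonneg_of_nonpos (by linarith) hlogq1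
    have hεA : ε * Real.log q ≤ ε * Real.log ε + (1 - ε) * Real.log (1 - ε)
        + (N:ℝ)⁻¹ * Real.log δ := by
      rw [hA_expand] at hεlogq; linarith
    have key : ε * Real.log q + (1 - ε) * Real.log (1 - q) - ε * Real.log ε
        - (1 - ε) * Real.log (1 - ε) ≤ (N:ℝ)⁻¹ * Real.log δ := by linarith
    have key2 := mul_le_mul_of_nonneg_left key hNR.le
    rw [← mul_assoc, mul_inv_cancel₀ hNR.ne', one_mul] at key2
    calc -(Real.log ε + Real.log (1 - q) - Real.log (1 - ε) - Real.log q) * ((N:ℝ) * ε)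
          + (N:ℝ) * (Real.log (1 - q) - Real.log (1 - ε))
        = (N:ℝ) * (ε * Real.log q + (1 - ε) * Real.log (1 - q) - ε * Real.log ε
            - (1 - ε) * Real.log (1 - ε)) := by ring
      _ ≤ Real.log δ := key2
  -- combine everything
  have hchain : (μ {ω | (N:ℝ) * ε ≤ (∑ j, ξ j) ω}).toReal ≤ δ := by
    calc (μ {ω | (N:ℝ) * ε ≤ (∑ j, ξ j) ω}).toReal
        ≤ Real.exp (-t * ((N:ℝ) * ε)) * ∏ j, mgf (ξ j) μ t := hcher
      _ ≤ Real.exp (-t * ((N:ℝ) * ε)) * M ^ N := by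
          apply mul_le_mul_of_nonneg_left hAMGM (Real.exp_pos _).le
      _ ≤ δ := hfinal
  set E : Set Ω := {ω | (N : ℝ)⁻¹ * ∑ j, ξ j ω ≤ ε} with hE_def
  have hEmeas : MeasurableSet E := by
    apply measurableSet_le _ measurable_const
    exact Measurable.const_mul (Finset.measurable_sum _ fun j _ => hξm j) _
  have hsub : Eᶜ ⊆ {ω | (N:ℝ) * ε ≤ (∑ j, ξ j) ω} := by
    intro ω hω
    simp only [hE_def, Set.mem_compl_iff, Set.mem_setOf_eq, not_le] at hω
    simp only [Set.mem_setOf_eq, Finset.sum_apply]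
    have h2 := mul_lt_mul_of_pos_left hω hNR
    rw [← mul_assoc, mul_inv_cancel₀ hNR.ne', one_mul] at h2
    linarith
  have hcompl : (μ Eᶜ).toReal ≤ δ :=
    le_trans (ENNReal.toReal_mono (measure_ne_top μ _) (measure_mono hsub)) hchain
  have hadd : (μ E).toReal + (μ Eᶜ).toReal = 1 := by
    rw [← ENNReal.toReal_add (measure_ne_top μ _) (measure_ne_top μ _),
      measure_add_measure_compl hEmeas]
    simp
  linarith
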